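/- Let a be any real number, set x₀ = Real.sqrt ((1 + Real.sqrt (1 + a²)) / 2), and define the vector field v : ℝ² → ℝ² by v(x, y) = (x² − y² − 1, −2xy + a). Then x₀ > 0 and v(x, y) = (0, 0) if and only if (x, y) = (x₀, a / (2·x₀)) or (x, y) = (−x₀, −a / (2·x₀)); in particular, for every value of the parameter a the field v has exactly two singular points. -/

import Mathlib

/-- For every parameter `a`, the saddle-connection model field
`v(x,y) = (x² − y² − 1, −2xy + a)` has exactly two singular points, namely
`(x₀, a/(2x₀))` and `(−x₀, −a/(2x₀))` with `x₀ = √((1 + √(1 + a²))/2) > 0`. -/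
theorem saddleConnection_two_zeros (a : ℝ)
    (x₀ : ℝ) (hx₀ : x₀ = Real.sqrt ((1 + Real.sqrt (1 + a ^ 2)) / 2))
    (v : ℝ × ℝ → ℝ × ℝ)
    (hv : ∀ x y : ℝ, v (x, y) = (x ^ 2 - y ^ 2 - 1, -2 * x * y + a)) :
    0 < x₀ ∧
    (∀ x y : ℝ, v (x, y) = (0, 0) ↔
      (x, y) = (x₀, a / (2 * x₀)) ∨ (x, y) = (-x₀, -a / (2 * x₀))) ∧
    {p : ℝ × ℝ | v p = (0, 0)}.ncard = 2 := by
  set s := Real.sqrt (1 + a ^ 2) with hsdef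
  have hs0 : (0:ℝ) ≤ 1 + a ^ 2 := by positivity
  have hs2 : s ^ 2 = 1 + a ^ 2 := Real.sq_sqrt hs0
  have hsnn : 0 ≤ s := Real.sqrt_nonneg _
  have hs1 : 1 ≤ s := by nlinarith
  have hx2 : x₀ ^ 2 = (1 + s) / 2 := by
    rw [hx₀]; exact Real.sq_sqrt (by linarith)
  have hx0 : 0 < x₀ := by
    rw [hx₀]; exact Real.sqrt_pos.mpr (by linarith)
  have hxne : x₀ ≠ 0 := ne_of_gt hx0
  have hiff : ∀ x y : ℝ, v (x, y) = (0, 0) ↔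
      (x, y) = (x₀, a / (2 * x₀)) ∨ (x, y) = (-x₀, -a / (2 * x₀)) := by
    intro x y
    rw [hv]
    simp only [Prod.mk.injEq]
    constructor
    · rintro ⟨h1, h2⟩
      have hx2y : x ^ 2 = 1 + y ^ 2 := by linarith
      have hxne' : x ≠ 0 := by
        intro h; rw [h] at hx2y; nlinarith
      have ha : a = 2 * x * y := by linarith
      have hsq : x ^ 2 = x₀ ^ 2 := by
        have h2x : 1 ≤ x ^ 2 := by nlinarith
        have hfac : (s - (2 * x ^ 2 - 1)) * (s + (2 * x ^ 2 - 1)) = 0 := by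
          linear_combination hs2 + (a + 2 * x * y) * ha - 4 * x ^ 2 * h1
        have hse : s = 2 * x ^ 2 - 1 := by
          rcases mul_eq_zero.mp hfac with h | h
          · linarith
          · nlinarith
        rw [hx2, hse]; ring
      have hxx : x = x₀ ∨ x = -x₀ := by
        have : (x - x₀) * (x + x₀) = 0 := by nlinarith
        rcases mul_eq_zero.mp this with h | h
        · left; linarith
        · right; linarith
      rcases hxx with h | h
      · left
        refine ⟨h, ?_⟩
        rw [h] at ha
        field_simp [ha]
        rw [ha]; ring
      · right
        refine ⟨h, ?_⟩
        rw [h] at ha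
        field_simp [ha]
        rw [ha]; ring
    · have hy2 : (a / (2 * x₀)) ^ 2 = (s - 1) / 2 := by
        have h4 : (2 * x₀) ^ 2 = 2 * (1 + s) := by
          rw [mul_pow, hx2]; ring
        rw [div_pow, h4, div_eq_div_iff (by linarith) (by norm_num)]
        linear_combination -2 * hs2
      have hneg : (-a / (2 * x₀)) ^ 2 = (a / (2 * x₀)) ^ 2 := by
        rw [neg_div, neg_sq]
      rintro (⟨hx, hy⟩ | ⟨hx, hy⟩) <;> subst hx <;> subst hy
      · refine ⟨by linarith [hy2, hx2], by field_simp; ring⟩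
      · refine ⟨?_, ?_⟩
        · have : (-x₀) ^ 2 = x₀ ^ 2 := by ring
          rw [this, hneg]; linarith [hy2, hx2]
        · field_simp; ring
  refine ⟨hx0, hiff, ?_⟩
  have hset : {p : ℝ × ℝ | v p = (0, 0)} =
      {(x₀, a / (2 * x₀)), (-x₀, -a / (2 * x₀))} := by
    ext ⟨x, y⟩
    simp only [Set.mem_setOf_eq, Set.mem_insert_iff, Set.mem_singleton_iff]
    exact hiff x y
  rw [hset]
  apply Set.ncard_pair
  intro h
  have : x₀ = -x₀ := congrArg Prod.fst h
  linarith
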